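/- The operators E, F, K, K′ on V = ℂ^{n+1} satisfy: K and K′ are invertible and commute, K E = (r s^{−1}) E K, K′ E = (r^{−1} s) E K′, K F = (r^{−1} s) F K, K′ F = (r s^{−1}) F K′, and E F − F E = (K − K′)/(r − s). (That is, V_n is a representation of the two-parameter quantum group U_{r,s}(sl₂).) -/

import Mathlib

/-- The two-parameter quantum integer `[m] = (r^m - s^m)/(r - s)`. -/
noncomputable def qint (r s : ℂ) (m : ℕ) : ℂ := (r ^ m - s ^ m) / (r - s)

/-- The operator `E` on `V = ℂ^{n+1}`, `E v_i = [n+1-i] v_{i-1}` (with `v_{-1} = 0`). -/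
noncomputable def Emat (n : ℕ) (r s : ℂ) : Matrix (Fin (n + 1)) (Fin (n + 1)) ℂ :=
  Matrix.of fun j i => if (j : ℕ) + 1 = (i : ℕ) then qint r s (n + 1 - (i : ℕ)) else 0

/-- The operator `F` on `V = ℂ^{n+1}`, `F v_i = [i+1] v_{i+1}` (with `v_{n+1} = 0`). -/
noncomputable def Fmat (n : ℕ) (r s : ℂ) : Matrix (Fin (n + 1)) (Fin (n + 1)) ℂ :=
  Matrix.of fun j i => if (j : ℕ) = (i : ℕ) + 1 then qint r s ((i : ℕ) + 1) else 0

/-- The operator `K` on `V = ℂ^{n+1}`, `K v_i = r^{n-i} s^i v_i`. -/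
noncomputable def Kmat (n : ℕ) (r s : ℂ) : Matrix (Fin (n + 1)) (Fin (n + 1)) ℂ :=
  Matrix.diagonal fun i => r ^ (n - (i : ℕ)) * s ^ (i : ℕ)

/-- The operator `K′` on `V = ℂ^{n+1}`, `K′ v_i = r^i s^{n-i} v_i`. -/
noncomputable def K'mat (n : ℕ) (r s : ℂ) : Matrix (Fin (n + 1)) (Fin (n + 1)) ℂ :=
  Matrix.diagonal fun i => r ^ (i : ℕ) * s ^ (n - (i : ℕ))

lemma sum2 {n : ℕ} (a b : ℕ) (f : ℕ → ℂ) :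
    (∑ x : Fin (n+1), if (x:ℕ) = a then if b = (x:ℕ) then f (x:ℕ) else 0 else 0)
      = if a = b ∧ a ≤ n then f a else 0 := by
  by_cases h : a = b ∧ a ≤ n
  · rw [if_pos h, Finset.sum_eq_single (⟨a, Nat.lt_succ_of_le h.2⟩ : Fin (n+1))]
    · simp [h.1]
    · intro c _ hc
      rw [if_neg (fun hx => hc (Fin.ext hx))]
    · simp
  · rw [if_neg h]
    apply Finset.sum_eq_zero
    intro x _
    by_cases hx : (x:ℕ) = a
    · rw [if_pos hx, if_neg]
      intro hb
      exact h ⟨by omega, by have := x.isLt; omega⟩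
    · rw [if_neg hx]

lemma sum3 {n : ℕ} (a b : ℕ) (f : ℕ → ℂ) :
    (∑ x : Fin (n+1), if (x:ℕ) + 1 = a then if b = (x:ℕ) + 1 then f (x:ℕ) else 0 else 0)
      = if a = b ∧ 1 ≤ a ∧ a ≤ n + 1 then f (a-1) else 0 := by
  by_cases h : a = b ∧ 1 ≤ a ∧ a ≤ n + 1
  · rw [if_pos h, Finset.sum_eq_single (⟨a-1, by omega⟩ : Fin (n+1))]
    · simp only
      rw [if_pos (by omega), if_pos (by omega)]
    · intro c _ hc
      rw [if_neg (fun hx => hc (Fin.ext (by simp; omega)))]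
    · simp
  · rw [if_neg h]
    apply Finset.sum_eq_zero
    intro x _
    by_cases hx : (x:ℕ) + 1 = a
    · rw [if_pos hx, if_neg]
      intro hb
      exact h ⟨by omega, by omega, by have := x.isLt; omega⟩
    · rw [if_neg hx]

lemma EF_comm (n : ℕ) (r s : ℂ) (hrs : r ≠ s) :
    Emat n r s * Fmat n r s - Fmat n r s * Emat n r s
      = (r - s)⁻¹ • (Kmat n r s - K'mat n r s) := by
  have hrs' : r - s ≠ 0 := sub_ne_zero.mpr hrs
  ext j i
  simp only [Matrix.sub_apply, Matrix.smul_apply, Matrix.mul_apply, Emat, Fmat, Kmat, K'mat,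
    Matrix.of_apply, ite_mul, mul_ite, zero_mul, mul_zero,
    Matrix.diagonal_apply, smul_eq_mul]
  rw [sum2 ((i:ℕ)+1) ((j:ℕ)+1) (fun m => qint r s (n+1-m) * qint r s ((i:ℕ)+1)),
      sum3 (i:ℕ) (j:ℕ) (fun m => qint r s (m+1) * qint r s (n+1-(i:ℕ)))]
  by_cases hji : j = i
  · subst hji
    rw [if_pos rfl, if_pos rfl]
    simp only [eq_self_iff_true, true_and]
    split_ifs with hA hB hB
    · -- 1 ≤ j, j + 1 ≤ n
      have h1 : (j:ℕ) - 1 + 1 = (j:ℕ) := by omega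
      have h2 : n + 1 - ((j:ℕ)+1) = n - (j:ℕ) := by omega
      have e1 : n + 1 - (j:ℕ) = (n - (j:ℕ)) + 1 := by omega
      rw [h1, h2, e1]
      simp only [qint]
      generalize (n - (j:ℕ)) = m
      field_simp
      ring
    · -- j = 0, j + 1 ≤ n
      have hj0 : (j:ℕ) = 0 := by
        by_contra h
        exact hB ⟨by omega, by omega⟩
      rw [hj0]
      have h2 : n + 1 - (0+1) = n := by omega
      rw [h2]
      have h3 : n - 0 = n := by omega
      rw [h3]
      simp only [qint, pow_zero, pow_one]
      field_simp
      try ring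
    · -- j = n, 1 ≤ j
      have hj : (j:ℕ) = n := by have := j.isLt; omega
      have h1 : (j:ℕ) - 1 + 1 = (j:ℕ) := by omega
      rw [h1, hj]
      have h2 : n + 1 - n = 1 := by omega
      have h3 : n - n = 0 := by omega
      rw [h2, h3]
      simp only [qint, pow_one, pow_zero]
      field_simp
      ring
    · -- n = 0, j = 0
      have hj : (j:ℕ) = 0 := by omega
      have hn : n = 0 := by have := j.isLt; omega
      simp [hj, hn]
  · have hne : (j:ℕ) ≠ (i:ℕ) := fun h => hji (Fin.ext h)
    simp only [if_neg hji]
    rw [if_neg (by omega : ¬((i:ℕ)+1 = (j:ℕ)+1 ∧ (i:ℕ)+1 ≤ n)),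
        if_neg (by omega : ¬((i:ℕ) = (j:ℕ) ∧ 1 ≤ (i:ℕ) ∧ (i:ℕ) ≤ n+1))]
    ring

lemma diag_E {n : ℕ} (r s : ℂ) (d : Fin (n+1) → ℂ) (c : ℂ)
    (h : ∀ i k : Fin (n+1), (i:ℕ) + 1 = (k:ℕ) → d i = c * d k) :
    Matrix.diagonal d * Emat n r s = c • (Emat n r s * Matrix.diagonal d) := by
  ext i k
  simp only [Matrix.smul_apply, Matrix.diagonal_mul, Matrix.mul_diagonal, Emat,
    Matrix.of_apply, smul_eq_mul]
  split_ifs with hc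
  · rw [h i k hc]; ring
  · ring

lemma diag_F {n : ℕ} (r s : ℂ) (d : Fin (n+1) → ℂ) (c : ℂ)
    (h : ∀ i k : Fin (n+1), (i:ℕ) = (k:ℕ) + 1 → d i = c * d k) :
    Matrix.diagonal d * Fmat n r s = c • (Fmat n r s * Matrix.diagonal d) := by
  ext i k
  simp only [Matrix.smul_apply, Matrix.diagonal_mul, Matrix.mul_diagonal, Fmat,
    Matrix.of_apply, smul_eq_mul]
  split_ifs with hc
  · rw [h i k hc]; ring
  · ring

/-- `V_n` is a representation of the two-parameter quantum group `U_{r,s}(sl₂)`: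
`K, K′` are invertible and commute, `K E = (r s⁻¹) E K`, `K′ E = (r⁻¹ s) E K′`,
`K F = (r⁻¹ s) F K`, `K′ F = (r s⁻¹) F K′`, and `E F − F E = (K − K′)/(r − s)`. -/
theorem Vn_is_representation (n : ℕ) (r s : ℂ) (hr : r ≠ 0) (hs : s ≠ 0) (hrs : r ≠ s) :
    IsUnit (Kmat n r s) ∧ IsUnit (K'mat n r s) ∧
    Kmat n r s * K'mat n r s = K'mat n r s * Kmat n r s ∧
    Kmat n r s * Emat n r s = (r * s⁻¹) • (Emat n r s * Kmat n r s) ∧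
    K'mat n r s * Emat n r s = (r⁻¹ * s) • (Emat n r s * K'mat n r s) ∧
    Kmat n r s * Fmat n r s = (r⁻¹ * s) • (Fmat n r s * Kmat n r s) ∧
    K'mat n r s * Fmat n r s = (r * s⁻¹) • (Fmat n r s * K'mat n r s) ∧
    Emat n r s * Fmat n r s - Fmat n r s * Emat n r s
      = (r - s)⁻¹ • (Kmat n r s - K'mat n r s) := by
  have key : ∀ i k : Fin (n+1), (i:ℕ) + 1 = (k:ℕ) → n - (i:ℕ) = (n - (k:ℕ)) + 1 := by
    intro i k h
    have := k.isLt; omega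
  refine ⟨?_, ?_, ?_, ?_, ?_, ?_, ?_, EF_comm n r s hrs⟩
  · rw [Matrix.isUnit_iff_isUnit_det, Kmat, Matrix.det_diagonal, isUnit_iff_ne_zero]
    exact Finset.prod_ne_zero_iff.mpr fun i _ =>
      mul_ne_zero (pow_ne_zero _ hr) (pow_ne_zero _ hs)
  · rw [Matrix.isUnit_iff_isUnit_det, K'mat, Matrix.det_diagonal, isUnit_iff_ne_zero]
    exact Finset.prod_ne_zero_iff.mpr fun i _ =>
      mul_ne_zero (pow_ne_zero _ hr) (pow_ne_zero _ hs)
  · rw [Kmat, K'mat, Matrix.diagonal_mul_diagonal, Matrix.diagonal_mul_diagonal]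
    apply congrArg Matrix.diagonal; funext i; ring
  · exact diag_E r s _ _ fun i k h => by
      rw [key i k h, ← h, pow_succ, pow_succ]
      field_simp
  · exact diag_E r s _ _ fun i k h => by
      rw [key i k h, ← h, pow_succ, pow_succ]
      field_simp
  · exact diag_F r s _ _ fun i k h => by
      rw [key k i h.symm, h, pow_succ, pow_succ]
      field_simp
  · exact diag_F r s _ _ fun i k h => by
      rw [key k i h.symm, h, pow_succ, pow_succ]
      field_simp
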